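/- Let A and B be real positive definite symmetric 2×2 matrices with det A ≥ 1, det B ≥ 1, and det((A+B)/2) ≤ 1 + δ for some δ ≥ 0. Let C = (Λ_A^{-1})^* B Λ_A^{-1} where Λ_A is the Cholesky factor of A, and write Λ_C = ((x, y), (0, z)) for the Cholesky factor of C. Then 1/(4(1+δ)) ≤ x ≤ 2√(1+δ), 1/(4(1+δ)) ≤ z ≤ 2√(1+δ), and 1/(2√(1+δ)) ≤ xz ≤ 2√(1+δ). -/
import Mathlib

private lemma le_of_sq_le'' (a b : ℝ) (ha : 0 < a) (hb : 0 < b) (h : a ^ 2 ≤ b ^ 2) :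
    a ≤ b := by nlinarith

private lemma one_le_of_one_le_sq'' (t : ℝ) (ht : 0 < t) (h : 1 ≤ t ^ 2) : 1 ≤ t := by
  nlinarith

lemma cholesky_aux (x z w K s δ : ℝ) (hx0 : 0 < x) (hz0 : 0 < z) (hδ : 0 ≤ δ)
    (hs2 : s ^ 2 = 1 + δ) (hs1 : 1 ≤ s)
    (hK1 : 1 ≤ K) (hK2 : 1 ≤ (x * z) ^ 2 * K)
    (hmain : K * ((1 + x ^ 2) * (1 + z ^ 2) + w ^ 2) ≤ 4 * s ^ 2) :
    (1 / (4 * (1 + δ)) ≤ x ∧ x ≤ 2 * s) ∧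
    (1 / (4 * (1 + δ)) ≤ z ∧ z ≤ 2 * s) ∧
    (1 / (2 * s) ≤ x * z ∧ x * z ≤ 2 * s) := by
  have hs0 : 0 < s := by linarith
  have hK0 : 0 ≤ K := by linarith
  have hE0 : (0:ℝ) ≤ (1 + x ^ 2) * (1 + z ^ 2) + w ^ 2 := by positivity
  have hEx : x ^ 2 ≤ (1 + x ^ 2) * (1 + z ^ 2) + w ^ 2 := by
    nlinarith [sq_nonneg z, sq_nonneg (x * z), sq_nonneg w]
  have hEz : z ^ 2 ≤ (1 + x ^ 2) * (1 + z ^ 2) + w ^ 2 := by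
    nlinarith [sq_nonneg x, sq_nonneg (x * z), sq_nonneg w]
  have hE1 : 1 ≤ (1 + x ^ 2) * (1 + z ^ 2) + w ^ 2 := by
    nlinarith [sq_nonneg x, sq_nonneg z, sq_nonneg (x * z), sq_nonneg w]
  have hEP : (x * z) ^ 2 ≤ (1 + x ^ 2) * (1 + z ^ 2) + w ^ 2 := by
    nlinarith [sq_nonneg x, sq_nonneg z, sq_nonneg w]
  have hx2 : x ^ 2 ≤ 4 * s ^ 2 :=
    le_trans (le_trans hEx (le_mul_of_one_le_left hE0 hK1)) hmain
  have hz2 : z ^ 2 ≤ 4 * s ^ 2 :=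
    le_trans (le_trans hEz (le_mul_of_one_le_left hE0 hK1)) hmain
  have hxle : x ≤ 2 * s :=
    le_of_sq_le'' x (2 * s) hx0 (by positivity)
      (by calc x ^ 2 ≤ 4 * s ^ 2 := hx2
        _ = (2 * s) ^ 2 := by ring)
  have hzle : z ≤ 2 * s :=
    le_of_sq_le'' z (2 * s) hz0 (by positivity)
      (by calc z ^ 2 ≤ 4 * s ^ 2 := hz2
        _ = (2 * s) ^ 2 := by ring)
  have hKle : K ≤ 4 * s ^ 2 :=
    le_trans (le_mul_of_one_le_right hK0 hE1) hmain
  have hPK : (x * z) ^ 2 * K ≤ 4 * s ^ 2 := by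
    calc (x * z) ^ 2 * K ≤ ((1 + x ^ 2) * (1 + z ^ 2) + w ^ 2) * K :=
          mul_le_mul_of_nonneg_right hEP hK0
    _ = K * ((1 + x ^ 2) * (1 + z ^ 2) + w ^ 2) := mul_comm _ _
    _ ≤ 4 * s ^ 2 := hmain
  have hP0 : 0 < x * z := mul_pos hx0 hz0
  have hP2 : (x * z) ^ 2 ≤ 4 * s ^ 2 :=
    le_trans (le_mul_of_one_le_right (sq_nonneg _) hK1) hPK
  have hPle : x * z ≤ 2 * s :=
    le_of_sq_le'' (x * z) (2 * s) hP0 (by positivity)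
      (by calc (x * z) ^ 2 ≤ 4 * s ^ 2 := hP2
        _ = (2 * s) ^ 2 := by ring)
  have hP2ge : 1 ≤ (x * z) ^ 2 * (4 * s ^ 2) :=
    le_trans hK2 (mul_le_mul_of_nonneg_left hKle (sq_nonneg _))
  have h1 : (1:ℝ) ≤ x * z * (2 * s) :=
    one_le_of_one_le_sq'' _ (by positivity)
      (by calc (1:ℝ) ≤ (x * z) ^ 2 * (4 * s ^ 2) := hP2ge
        _ = (x * z * (2 * s)) ^ 2 := by ring)
  have hPge : 1 / (2 * s) ≤ x * z := by
    rw [div_le_iff₀ (by positivity)]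
    exact h1
  have h4 : (0:ℝ) < 4 * (1 + δ) := by linarith
  have hxge : 1 / (4 * (1 + δ)) ≤ x := by
    rw [div_le_iff₀ h4, ← hs2]
    calc (1:ℝ) ≤ x * z * (2 * s) := h1
    _ = (x * (2 * s)) * z := by ring
    _ ≤ (x * (2 * s)) * (2 * s) := by
        exact mul_le_mul_of_nonneg_left hzle (by positivity)
    _ = x * (4 * s ^ 2) := by ring
  have hzge : 1 / (4 * (1 + δ)) ≤ z := by
    rw [div_le_iff₀ h4, ← hs2]
    calc (1:ℝ) ≤ x * z * (2 * s) := h1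
    _ = (z * (2 * s)) * x := by ring
    _ ≤ (z * (2 * s)) * (2 * s) := by
        exact mul_le_mul_of_nonneg_left hxle (by positivity)
    _ = z * (4 * s ^ 2) := by ring
  exact ⟨⟨hxge, hxle⟩, ⟨hzge, hzle⟩, hPge, hPle⟩

open Matrix

set_option maxHeartbeats 800000 in
theorem cholesky_ratio_bounds (A B LA LC : Matrix (Fin 2) (Fin 2) ℝ) (δ : ℝ) (hδ : 0 ≤ δ)
    (hA : A.PosDef) (hB : B.PosDef)
    (hdetA : 1 ≤ A.det) (hdetB : 1 ≤ B.det)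
    (hdetAB : (((1 : ℝ)/2) • (A + B)).det ≤ 1 + δ)
    (hLAtri : LA 1 0 = 0) (hLA00 : 0 < LA 0 0) (hLA11 : 0 < LA 1 1)
    (hLA : LAᵀ * LA = A)
    (hLCtri : LC 1 0 = 0) (hLC00 : 0 < LC 0 0) (hLC11 : 0 < LC 1 1)
    (hLC : LCᵀ * LC = (LA⁻¹)ᵀ * B * LA⁻¹) :
    (1 / (4 * (1 + δ)) ≤ LC 0 0 ∧ LC 0 0 ≤ 2 * Real.sqrt (1 + δ)) ∧
    (1 / (4 * (1 + δ)) ≤ LC 1 1 ∧ LC 1 1 ≤ 2 * Real.sqrt (1 + δ)) ∧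
    (1 / (2 * Real.sqrt (1 + δ)) ≤ LC 0 0 * LC 1 1 ∧
      LC 0 0 * LC 1 1 ≤ 2 * Real.sqrt (1 + δ)) := by
  have hdetLA : LA.det = LA 0 0 * LA 1 1 := by
    rw [Matrix.det_fin_two, hLAtri]; ring
  have hdetLAne : LA.det ≠ 0 := by
    rw [hdetLA]; positivity
  have hinv : IsUnit LA.det := isUnit_iff_ne_zero.mpr hdetLAne
  have hinvT : IsUnit LAᵀ.det := by rwa [Matrix.det_transpose]
  have hBdef : B = (LC * LA)ᵀ * (LC * LA) := by
    have h1 : LAᵀ * (LCᵀ * LC) * LA = B := by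
      rw [hLC, Matrix.transpose_nonsing_inv]
      rw [show LAᵀ * ((LAᵀ)⁻¹ * B * LA⁻¹) * LA = (LAᵀ * (LAᵀ)⁻¹) * B * (LA⁻¹ * LA) by
        simp [Matrix.mul_assoc]]
      rw [Matrix.mul_nonsing_inv _ hinvT, Matrix.nonsing_inv_mul _ hinv]
      simp
    rw [← h1, Matrix.transpose_mul]
    noncomm_ring
  have hdA : A.det = (LA 0 0 * LA 1 1) ^ 2 := by
    rw [← hLA, Matrix.det_mul, Matrix.det_transpose, hdetLA]; ring
  have hdB : B.det = (LC 0 0 * LC 1 1) ^ 2 * (LA 0 0 * LA 1 1) ^ 2 := by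
    rw [hBdef, Matrix.det_mul, Matrix.det_transpose, Matrix.det_mul, hdetLA,
      Matrix.det_fin_two, hLCtri]
    ring
  have hE : (((1 : ℝ)/2) • (A + B)).det
      = (LA 0 0 * LA 1 1) ^ 2 *
        ((1 + LC 0 0 ^ 2) * (1 + LC 1 1 ^ 2) + LC 0 1 ^ 2) / 4 := by
    rw [← hLA, hBdef, Matrix.det_fin_two]
    simp only [Matrix.smul_apply, Matrix.add_apply, Matrix.mul_apply,
      Fin.sum_univ_two, Matrix.transpose_apply, hLAtri, hLCtri, smul_eq_mul]
    ring
  have hs2 : Real.sqrt (1 + δ) ^ 2 = 1 + δ := Real.sq_sqrt (by linarith)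
  have hs1 : 1 ≤ Real.sqrt (1 + δ) := Real.one_le_sqrt.mpr (by linarith)
  refine cholesky_aux (LC 0 0) (LC 1 1) (LC 0 1) ((LA 0 0 * LA 1 1) ^ 2)
    (Real.sqrt (1 + δ)) δ hLC00 hLC11 hδ hs2 hs1 ?_ ?_ ?_
  · rw [hdA] at hdetA; exact hdetA
  · rw [hdB] at hdetB; exact hdetB
  · rw [hE] at hdetAB; rw [hs2]; linarith
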